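/- The class of all finite linear orders in the language {<} is not a weak multidimensional exact class for any set R of measuring functions: for the formula φ(x,y) := x < y, there is no finite partition Π of the set of pointed structures {(M, a) : M a finite linear order, a ∈ M} such that |φ(M, a)| depends only on the part of Π containing (M, a) and on M. -/

import Mathlib

/-- A bundled finite linear order. -/
structure FinLinOrd where
  carrier : Type
  [lin : LinearOrder carrier]
  [fin : Finite carrier]

attribute [instance] FinLinOrd.lin FinLinOrd.fin

lemma card_lt_fin (n : ℕ) (a : Fin n) : Nat.card {x : Fin n | x < a} = a.val := by
  have : {x : Fin n | x < a} = Set.Iio a := rfl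
  rw [this, Nat.card_eq_fintype_card, Fintype.card_ofFinset]
  simp [Fin.card_Iio]
  simp

/-- The class of all finite linear orders is not a weak multidimensional exact class for
any set of measuring functions: for the formula `φ(x, y) := x < y` there is no finite
partition of the pointed structures `(M, a)` such that `|φ(M, a)|` depends only on the
part containing `(M, a)` and on `M`. -/
theorem stmt_3 :
    ¬ ∃ (ι : Type) (_ : Finite ι)
        (part : (Σ M : FinLinOrd, M.carrier) → ι)
        (h : ι → FinLinOrd → ℕ),
        ∀ (M : FinLinOrd) (a : M.carrier),
          Nat.card {x : M.carrier | x < a} = h (part ⟨M, a⟩) M := by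
  rintro ⟨ι, hι, part, h, hspec⟩
  cases nonempty_fintype ι
  set k := Fintype.card ι with hk
  set M : FinLinOrd := ⟨Fin (k + 1)⟩ with hM
  have hinj : Function.Injective (fun a : Fin (k + 1) => part ⟨M, a⟩) := by
    intro a b hab
    have ha : Nat.card {x : Fin (k+1) | x < a} = h (part ⟨M, a⟩) M := hspec M a
    have hb : Nat.card {x : Fin (k+1) | x < b} = h (part ⟨M, b⟩) M := hspec M b
    simp only at hab
    rw [hab] at ha
    rw [card_lt_fin] at ha hb
    exact Fin.ext (ha.trans hb.symm)
  have := Fintype.card_le_of_injective _ hinj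
  simp [hk] at this
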